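/- Let (V_j)_{0≤j<n} be a snarl in ℝ^m with codimensions κ_j, κ_0 = max_j κ_j > 1, and let S′, S″ be a partition of {1,…,n−1} into nonempty sets; write V_{S′} = ⋂_{j∈S′} V_j and V_{S″} = ⋂_{j∈S″} V_j. Suppose W′ ⊆ V_{S′} and W″ ⊆ V_{S″} are subspaces of dimensions κ′, κ″ ≥ 1 with κ′ + κ″ = κ_0, W′ ∩ W″ = {0}, and (W′ + W″) ∩ V_0 = {0}. Define V_n = V_0 + W″ and V_{n+1} = V_0 + W′. Then V_n and V_{n+1} have codimensions κ′ and κ″ respectively, V_n ∩ V_{n+1} = V_0, and (V_1,…,V_{n−1},V_n,V_{n+1}) is a transverse splitting of (V_0,…,V_{n−1}). -/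

import Mathlib

open MeasureTheory Bornology

noncomputable section

/-- The codimension of a linear subspace of `ℝ^m`. -/
def codim {m : ℕ} (V : Submodule ℝ (Fin m → ℝ)) : ℕ :=
  m - Module.finrank ℝ V

/-- The ℓ¹ norm of the coefficients of a multivariate polynomial. -/
def polyL1Norm {σ : Type*} (P : MvPolynomial σ ℝ) : ℝ :=
  ∑ s ∈ P.support, |MvPolynomial.coeff s P|

/-- `P` is degenerate relative to the family `{π_j : j ∈ A}`. -/
def Degenerate {m : ℕ} (A : Finset ℕ) (κ : ℕ → ℕ)
    (π : ∀ j : ℕ, (Fin m → ℝ) →ₗ[ℝ] (Fin (κ j) → ℝ)) (P : MvPolynomial (Fin m) ℝ) : Prop :=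
  ∃ Q : ∀ j : ℕ, MvPolynomial (Fin (κ j)) ℝ,
    ∀ x : Fin m → ℝ, MvPolynomial.eval x P = ∑ j ∈ A, MvPolynomial.eval (π j x) (Q j)

/-- A fixed norm of the class of `P` in the quotient of polynomials of degree `≤ D`
modulo degenerate ones. -/
def normND {m : ℕ} (A : Finset ℕ) (κ : ℕ → ℕ) (D : ℕ)
    (π : ∀ j : ℕ, (Fin m → ℝ) →ₗ[ℝ] (Fin (κ j) → ℝ)) (P : MvPolynomial (Fin m) ℝ) : ℝ :=
  sInf {r : ℝ | ∃ Q : MvPolynomial (Fin m) ℝ,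
    Degenerate A κ π Q ∧ Q.totalDegree ≤ D ∧ r = polyL1Norm (P - Q)}

/-- The multilinear oscillatory integral form `I(P; f)`. -/
def oscInt {m : ℕ} (A : Finset ℕ) (κ : ℕ → ℕ)
    (π : ∀ j : ℕ, (Fin m → ℝ) →ₗ[ℝ] (Fin (κ j) → ℝ)) (P : MvPolynomial (Fin m) ℝ)
    (f : ∀ j : ℕ, (Fin (κ j) → ℝ) → ℂ) : ℂ :=
  ∫ x : Fin m → ℝ, Complex.exp (Complex.I * (MvPolynomial.eval x P : ℂ)) * ∏ j ∈ A, f j (π j x)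

/-- The uniform power decay property of a snarl `(V_j)_{j ∈ A}`. -/
def UniformPowerDecay {m : ℕ} (A : Finset ℕ) (κ : ℕ → ℕ)
    (V : ℕ → Submodule ℝ (Fin m → ℝ)) : Prop :=
  ∀ D : ℕ, ∃ γ : ℝ, 0 < γ ∧
    ∀ π : ∀ j : ℕ, (Fin m → ℝ) →ₗ[ℝ] (Fin (κ j) → ℝ),
      (∀ j ∈ A, Function.Surjective (π j)) →
      (∀ j ∈ A, LinearMap.ker (π j) = V j) →
      ∀ B : ∀ j : ℕ, Set (Fin (κ j) → ℝ), (∀ j ∈ A, IsBounded (B j)) →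
        ∃ C : ℝ, ∀ P : MvPolynomial (Fin m) ℝ, P.totalDegree ≤ D →
          0 < normND A κ D π P →
          ∀ f : ∀ j : ℕ, (Fin (κ j) → ℝ) → ℂ,
            (∀ j ∈ A, MemLp (f j) ⊤ volume) →
            (∀ j ∈ A, Function.support (f j) ⊆ B j) →
            ‖oscInt A κ π P f‖ ≤
              C * normND A κ D π P ^ (-γ) * ∏ j ∈ A, (eLpNorm (f j) ⊤ volume).toReal

/-- `(W_β)_{β ∈ B}` is a splitting of the snarl `(V_α)_{α ∈ A}`. -/
def IsSplitting {m : ℕ} (A B : Finset ℕ) (V W : ℕ → Submodule ℝ (Fin m → ℝ)) : Prop :=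
  ∃ α₀ β₁ β₂ : ℕ, α₀ ∈ A ∧ β₁ ∉ A ∧ β₂ ∉ A ∧ β₁ ≠ β₂ ∧ α₀ ∉ B ∧
    B = A.erase α₀ ∪ {β₁, β₂} ∧
    (∀ α ∈ A ∩ B, W α = V α) ∧
    (∀ β ∈ B, 1 ≤ codim (W β) ∧ codim (W β) < m) ∧
    W β₁ ⊓ W β₂ = V α₀ ∧
    codim (W β₁) + codim (W β₂) = codim (V α₀)

/-- `(W_β)_{β ∈ B}` is a transverse splitting of the snarl `(V_α)_{α ∈ A}`. -/
def IsTransverseSplitting {m : ℕ} (A B : Finset ℕ)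
    (V W : ℕ → Submodule ℝ (Fin m → ℝ)) : Prop :=
  ∃ α₀ β₁ β₂ : ℕ, α₀ ∈ A ∧ β₁ ∉ A ∧ β₂ ∉ A ∧ β₁ ≠ β₂ ∧ α₀ ∉ B ∧
    B = A.erase α₀ ∪ {β₁, β₂} ∧
    (∀ α ∈ A ∩ B, W α = V α) ∧
    (∀ β ∈ B, 1 ≤ codim (W β) ∧ codim (W β) < m) ∧
    W β₁ ⊓ W β₂ = V α₀ ∧
    codim (W β₁) + codim (W β₂) = codim (V α₀) ∧
    ∃ A₁ A₂ : Finset ℕ, A₁.Nonempty ∧ A₂.Nonempty ∧ Disjoint A₁ A₂ ∧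
      A₁ ∪ A₂ = A.erase α₀ ∧
      0 < Module.finrank ℝ ↥(W β₁ ⊓ ⨅ α ∈ A₁, V α) ∧
      0 < Module.finrank ℝ ↥(W β₂ ⊓ ⨅ α ∈ A₂, V α) ∧
      W β₁ ⊔ W β₂ = ⊤ ∧
      W β₁ ⊔ V α₀ ≠ ⊤ ∧ W β₂ ⊔ V α₀ ≠ ⊤

/-- A chain of transverse splittings whose terminal element is one-dimensional. -/
def IsResolution {m : ℕ} (N : ℕ) (As : ℕ → Finset ℕ)
    (Vs : ℕ → ℕ → Submodule ℝ (Fin m → ℝ)) : Prop :=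
  (∀ k < N, IsTransverseSplitting (As k) (As (k + 1)) (Vs k) (Vs (k + 1))) ∧
  ∀ α ∈ As N, codim (Vs N α) = 1

/-- A one-dimensional snarl is in general position if for every subset `A'` the
corresponding lines of linear functionals span a space of dimension `min (|A'|, m)`;
equivalently, `⋂_{α ∈ A'} V_α` has codimension `min (|A'|, m)`. -/
def OneDimGeneralPosition {m : ℕ} (A : Finset ℕ)
    (V : ℕ → Submodule ℝ (Fin m → ℝ)) : Prop :=
  ∀ A' ⊆ A, codim (⨅ α ∈ A', V α) = min A'.card m

/-- The set of `m × m` matrices of orthogonal projections of rank `m - κ`;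
these parametrize the Grassmannian of codimension-`κ` subspaces of `ℝ^m`. -/
def projGrass (m κ : ℕ) : Set (Fin m → Fin m → ℝ) :=
  {p | (Matrix.of p).IsSymm ∧ Matrix.of p * Matrix.of p = Matrix.of p ∧
       (Matrix.of p).rank = m - κ}

/-- The product of Grassmannians `G(m, (κ_α)_{α ∈ A})`. -/
def GrassProd (m : ℕ) (A : Finset ℕ) (κ : ℕ → ℕ) : Set (A → Fin m → Fin m → ℝ) :=
  {p | ∀ α : A, p α ∈ projGrass m (κ α)}

/-- The snarl associated with a point of the product of Grassmannians. -/
def snarlFun {m : ℕ} (A : Finset ℕ) (p : A → Fin m → Fin m → ℝ) :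
    ℕ → Submodule ℝ (Fin m → ℝ) :=
  fun j => if h : j ∈ A then LinearMap.range (Matrix.toLin' (Matrix.of (p ⟨j, h⟩))) else ⊥

/-- `X` is an analytic subvariety of positive codimension of `G`: a closed subset
locally contained in the zero set of a real-analytic function which does not vanish
identically on any (relatively) open subset of `G`. -/
def IsAnalyticSubvarietyPosCodim {E : Type*} [NormedAddCommGroup E] [NormedSpace ℝ E]
    (G X : Set E) : Prop :=
  X ⊆ G ∧ IsClosed X ∧
    ∀ p ∈ G, ∃ U : Set E, IsOpen U ∧ p ∈ U ∧
      ∃ f : E → ℝ, AnalyticOnNhd ℝ f U ∧ (∀ x ∈ X ∩ U, f x = 0) ∧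
        ∀ O : Set E, IsOpen O → (O ∩ U ∩ G).Nonempty → ∃ x ∈ O ∩ U ∩ G, f x ≠ 0


/-- Given `W₁ ⊆ ⋂_{j∈S₁} V_j`, `W₂ ⊆ ⋂_{j∈S₂} V_j` of dimensions `κ', κ''` with
`κ' + κ'' = κ_0`, `W₁ ∩ W₂ = {0}` and `(W₁ + W₂) ∩ V_0 = {0}`, setting
`V_n = V_0 + W₂` and `V_{n+1} = V_0 + W₁`, the new subspaces have codimensions
`κ'` and `κ''` respectively, `V_n ∩ V_{n+1} = V_0`, and
`(V_1,…,V_{n−1},V_n,V_{n+1})` is a transverse splitting of `(V_0,…,V_{n−1})`. -/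
theorem statement6 {m n : ℕ} (V : ℕ → Submodule ℝ (Fin m → ℝ)) (κ : ℕ → ℕ)
    (hsnarl : ∀ j < n, 1 ≤ κ j ∧ κ j < m ∧ codim (V j) = κ j)
    (hmax : ∀ j < n, κ j ≤ κ 0) (hκ0 : 1 < κ 0) (hn : 0 < n)
    (S₁ S₂ : Finset ℕ) (hS₁ : S₁.Nonempty) (hS₂ : S₂.Nonempty)
    (hdisj : Disjoint S₁ S₂) (hunion : S₁ ∪ S₂ = Finset.Ico 1 n)
    (W₁ W₂ : Submodule ℝ (Fin m → ℝ)) (κ' κ'' : ℕ) (hκ' : 1 ≤ κ') (hκ'' : 1 ≤ κ'')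
    (hκsum : κ' + κ'' = κ 0)
    (hW₁ : W₁ ≤ ⨅ j ∈ S₁, V j) (hW₂ : W₂ ≤ ⨅ j ∈ S₂, V j)
    (hdim₁ : Module.finrank ℝ ↥W₁ = κ') (hdim₂ : Module.finrank ℝ ↥W₂ = κ'')
    (hint : W₁ ⊓ W₂ = ⊥) (hint0 : (W₁ ⊔ W₂) ⊓ V 0 = ⊥) :
    codim (V 0 ⊔ W₂) = κ' ∧ codim (V 0 ⊔ W₁) = κ'' ∧
    (V 0 ⊔ W₂) ⊓ (V 0 ⊔ W₁) = V 0 ∧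
    IsTransverseSplitting (Finset.range n) ((Finset.range n).erase 0 ∪ {n, n + 1}) V
      (fun j => if j = n then V 0 ⊔ W₂ else if j = n + 1 then V 0 ⊔ W₁ else V j) := by
  classical
  have hfr : Module.finrank ℝ (Fin m → ℝ) = m := Module.finrank_fin_fun ℝ
  obtain ⟨hκ0ge, hκ0lt, hcod0⟩ := hsnarl 0 hn
  have hV0le : Module.finrank ℝ ↥(V 0) ≤ m := by
    calc Module.finrank ℝ ↥(V 0) ≤ Module.finrank ℝ (Fin m → ℝ) :=
          Submodule.finrank_le _
      _ = m := hfr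
  have hV0 : Module.finrank ℝ ↥(V 0) = m - κ 0 := by
    unfold codim at hcod0; omega
  have hd2 : V 0 ⊓ W₂ = ⊥ := by
    have h1 : V 0 ⊓ W₂ ≤ (W₁ ⊔ W₂) ⊓ V 0 :=
      le_inf (inf_le_right.trans le_sup_right) inf_le_left
    rw [hint0] at h1
    exact le_bot_iff.mp h1
  have hd1 : V 0 ⊓ W₁ = ⊥ := by
    have h1 : V 0 ⊓ W₁ ≤ (W₁ ⊔ W₂) ⊓ V 0 :=
      le_inf (inf_le_right.trans le_sup_left) inf_le_left
    rw [hint0] at h1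
    exact le_bot_iff.mp h1
  have hfr2 : Module.finrank ℝ ↥(V 0 ⊔ W₂) = (m - κ 0) + κ'' := by
    have h := Submodule.finrank_sup_add_finrank_inf_eq (V 0) W₂
    rw [hd2] at h
    simp only [finrank_bot, add_zero] at h
    omega
  have hfr1 : Module.finrank ℝ ↥(V 0 ⊔ W₁) = (m - κ 0) + κ' := by
    have h := Submodule.finrank_sup_add_finrank_inf_eq (V 0) W₁
    rw [hd1] at h
    simp only [finrank_bot, add_zero] at h
    omega
  have hcod2 : codim (V 0 ⊔ W₂) = κ' := by
    unfold codim; rw [hfr2]; omega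
  have hcod1 : codim (V 0 ⊔ W₁) = κ'' := by
    unfold codim; rw [hfr1]; omega
  have hinf : (V 0 ⊔ W₂) ⊓ (V 0 ⊔ W₁) = V 0 := by
    apply le_antisymm
    · intro x hx
      obtain ⟨hx2, hx1⟩ := Submodule.mem_inf.mp hx
      rw [Submodule.mem_sup] at hx2 hx1
      obtain ⟨v, hv, w2, hw2, rfl⟩ := hx2
      obtain ⟨v', hv', w1, hw1, heq⟩ := hx1
      have hsub : w2 - w1 = v' - v := by
        rw [sub_eq_sub_iff_add_eq_add, heq]
        exact add_comm _ _
      have hmem : w2 - w1 ∈ (W₁ ⊔ W₂) ⊓ V 0 := by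
        refine Submodule.mem_inf.mpr ⟨?_, ?_⟩
        · exact sub_mem (Submodule.mem_sup_right hw2) (Submodule.mem_sup_left hw1)
        · rw [hsub]; exact sub_mem hv' hv
      rw [hint0] at hmem
      have hw21 : w2 = w1 := by
        have := (Submodule.mem_bot ℝ).mp hmem
        have := sub_eq_zero.mp this
        exact this
      have hw20 : w2 = 0 := by
        have : w2 ∈ W₁ ⊓ W₂ := Submodule.mem_inf.mpr ⟨hw21 ▸ hw1, hw2⟩
        rw [hint] at this
        exact (Submodule.mem_bot ℝ).mp this
      rw [hw20, add_zero]
      exact hv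
    · exact le_inf le_sup_left le_sup_left
  have hsupW : Module.finrank ℝ ↥(W₁ ⊔ W₂) = κ' + κ'' := by
    have h := Submodule.finrank_sup_add_finrank_inf_eq W₁ W₂
    rw [hint] at h
    simp only [finrank_bot, add_zero] at h
    omega
  have htop : (V 0 ⊔ W₂) ⊔ (V 0 ⊔ W₁) = ⊤ := by
    have heq : (V 0 ⊔ W₂) ⊔ (V 0 ⊔ W₁) = V 0 ⊔ (W₁ ⊔ W₂) := by
      rw [sup_sup_sup_comm, sup_idem, sup_comm W₂ W₁]
    rw [heq]
    apply Submodule.eq_top_of_finrank_eq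
    rw [hfr]
    have h := Submodule.finrank_sup_add_finrank_inf_eq (V 0) (W₁ ⊔ W₂)
    rw [inf_comm, hint0] at h
    simp only [finrank_bot, add_zero] at h
    omega
  have herase : (Finset.range n).erase 0 = Finset.Ico 1 n := by
    ext a
    simp only [Finset.mem_erase, Finset.mem_range, Finset.mem_Ico]
    omega
  refine ⟨hcod2, hcod1, hinf, ?_⟩
  refine ⟨0, n, n + 1, Finset.mem_range.mpr hn, by simp, by simp, by omega, ?_, rfl,
    ?_, ?_, ?_, ?_, ?_⟩
  · -- 0 ∉ B
    simp only [Finset.mem_union, Finset.mem_erase, Finset.mem_insert,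
      Finset.mem_singleton, Finset.mem_range]
    omega
  · -- W α = V α on A ∩ B
    beta_reduce
    intro α hα
    have hαn : α < n := Finset.mem_range.mp (Finset.mem_inter.mp hα).1
    simp only [if_neg (by omega : α ≠ n), if_neg (by omega : α ≠ n + 1)]
  · -- codim bounds
    intro β hβ
    rcases Finset.mem_union.mp hβ with h | h
    · obtain ⟨hβ0, hβn⟩ := Finset.mem_erase.mp h
      have hβn' : β < n := Finset.mem_range.mp hβn
      obtain ⟨h1, h2, h3⟩ := hsnarl β hβn'
      simp only [if_neg (by omega : β ≠ n), if_neg (by omega : β ≠ n + 1)]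
      omega
    · rcases Finset.mem_insert.mp h with rfl | h
      · beta_reduce
        rw [if_pos rfl, hcod2]
        omega
      · beta_reduce
        rw [Finset.mem_singleton.mp h, if_neg (by omega : ¬ n + 1 = n), if_pos rfl, hcod1]
        omega
  · -- W β₁ ⊓ W β₂ = V 0
    beta_reduce
    rw [if_pos rfl, if_neg (by omega : ¬ n + 1 = n), if_pos rfl]
    exact hinf
  · -- codim sum
    beta_reduce
    rw [if_pos rfl, if_neg (by omega : ¬ n + 1 = n), if_pos rfl, hcod2, hcod1, hcod0]
    omega
  · -- transversality data
    refine ⟨S₂, S₁, hS₂, hS₁, hdisj.symm, ?_, ?_, ?_, ?_, ?_, ?_⟩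
    · rw [Finset.union_comm, hunion, herase]
    · -- 0 < finrank (W β₁ ⊓ ⨅ S₂)
      beta_reduce
      rw [if_pos rfl]
      have hle : W₂ ≤ (V 0 ⊔ W₂) ⊓ ⨅ α ∈ S₂, V α := le_inf le_sup_right hW₂
      have := Submodule.finrank_mono hle
      omega
    · -- 0 < finrank (W β₂ ⊓ ⨅ S₁)
      beta_reduce
      rw [if_neg (by omega : ¬ n + 1 = n), if_pos rfl]
      have hle : W₁ ≤ (V 0 ⊔ W₁) ⊓ ⨅ α ∈ S₁, V α := le_inf le_sup_right hW₁
      have := Submodule.finrank_mono hle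
      omega
    · beta_reduce
      rw [if_pos rfl, if_neg (by omega : ¬ n + 1 = n), if_pos rfl]
      exact htop
    · beta_reduce
      rw [if_pos rfl]
      intro hcon
      have : Module.finrank ℝ ↥((V 0 ⊔ W₂) ⊔ V 0) = m := by
        rw [hcon, finrank_top, hfr]
      rw [sup_comm, ← sup_assoc, sup_idem, hfr2] at this
      omega
    · beta_reduce
      rw [if_neg (by omega : ¬ n + 1 = n), if_pos rfl]
      intro hcon
      have : Module.finrank ℝ ↥((V 0 ⊔ W₁) ⊔ V 0) = m := by
        rw [hcon, finrank_top, hfr]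
      rw [sup_comm, ← sup_assoc, sup_idem, hfr1] at this
      omega

end
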